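/- Let S be a finite set, P : S × S → ℝ row-stochastic, γ ∈ [0,1), and r : S → ℝ with |r(s)| ≤ r_max. Let v : S × ℝ^p → ℝ be differentiable in its second argument and θ* ∈ ℝ^p be such that: (i) ‖∇_θ v(s,θ)‖ ≤ l for all s and θ; (ii) |v(s,θ) − v(s,θ*)| ≤ l‖θ − θ*‖ for all s and θ; (iii) v(s,θ*) = r(s) + γ Σ_{s''} P(s,s'') v(s'',θ*) for all s. Then for all θ ∈ ℝ^p and all states s, s' ∈ S, the TD update direction satisfies ‖∇_θ v(s,θ) · (r(s) + γ v(s',θ) − v(s,θ))‖² ≤ 3(1+γ²) l⁴ ‖θ − θ*‖² + 12 γ² l² r_max² / (1−γ)². -/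

import Mathlib

/-- Bound on the TD update direction: if the gradients of `v` are bounded by `l`, `v` is
`l`-Lipschitz towards `θ*`, and `θ*` solves the Bellman equation, then
`‖∇_θ v(s,θ) (r(s) + γ v(s',θ) − v(s,θ))‖² ≤ 3(1+γ²)l⁴‖θ−θ*‖² + 12γ²l²r_max²/(1−γ)²`. -/
theorem stmt16 {S : Type*} [Fintype S] {p : ℕ}
    (P : S → S → ℝ) (hPnonneg : ∀ s s', 0 ≤ P s s') (hProw : ∀ s, ∑ s', P s s' = 1)
    (γ : ℝ) (hγ0 : 0 ≤ γ) (hγ1 : γ < 1)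
    (r : S → ℝ) (rmax : ℝ) (hrmax : 0 ≤ rmax) (hr : ∀ s, |r s| ≤ rmax)
    (l : ℝ) (hl : 0 ≤ l)
    (v : S → EuclideanSpace ℝ (Fin p) → ℝ)
    (hdiff : ∀ s, Differentiable ℝ (v s))
    (θstar : EuclideanSpace ℝ (Fin p))
    (hgrad : ∀ s θ, ‖gradient (v s) θ‖ ≤ l)
    (hlip : ∀ s θ, |v s θ - v s θstar| ≤ l * ‖θ - θstar‖)
    (hbellman : ∀ s, v s θstar = r s + γ * ∑ s'', P s s'' * v s'' θstar) :
    ∀ (θ : EuclideanSpace ℝ (Fin p)) (s s' : S),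
      ‖(r s + γ * v s' θ - v s θ) • gradient (v s) θ‖ ^ 2
        ≤ 3 * (1 + γ ^ 2) * l ^ 4 * ‖θ - θstar‖ ^ 2
          + 12 * γ ^ 2 * l ^ 2 * rmax ^ 2 / (1 - γ) ^ 2 := by
  intro θ s s'
  haveI : Nonempty S := ⟨s⟩
  -- the sup of |v · θstar|
  set M : ℝ := Finset.univ.sup' Finset.univ_nonempty (fun t => |v t θstar|) with hMdef
  have hM : ∀ t, |v t θstar| ≤ M := fun t =>
    Finset.le_sup' (fun t => |v t θstar|) (Finset.mem_univ t)
  have hM0 : 0 ≤ M := le_trans (abs_nonneg _) (hM s)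
  obtain ⟨t₀, -, ht₀⟩ := Finset.exists_mem_eq_sup' Finset.univ_nonempty
    (fun t => |v t θstar|)
  have hsum : ∀ t, |∑ s'', P t s'' * v s'' θstar| ≤ M := by
    intro t
    calc |∑ s'', P t s'' * v s'' θstar| ≤ ∑ s'', |P t s'' * v s'' θstar| :=
          Finset.abs_sum_le_sum_abs _ _
      _ ≤ ∑ s'', P t s'' * M := by
          apply Finset.sum_le_sum
          intro i _
          rw [abs_mul, abs_of_nonneg (hPnonneg t i)]
          exact mul_le_mul_of_nonneg_left (hM i) (hPnonneg t i)
      _ = M := by rw [← Finset.sum_mul, hProw t, one_mul]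
  have hMt : M = |v t₀ θstar| := by rw [hMdef, ht₀]
  have hMrec : M ≤ rmax + γ * M := by
    have h1 : |v t₀ θstar| ≤ rmax + γ * M := by
      rw [hbellman t₀]
      refine (abs_add_le _ _).trans (add_le_add (hr t₀) ?_)
      rw [abs_mul, abs_of_nonneg hγ0]
      exact mul_le_mul_of_nonneg_left (hsum t₀) hγ0
    exact hMt ▸ h1
  have h1γ : 0 < 1 - γ := by linarith
  have hMle : M ≤ rmax / (1 - γ) := by
    rw [le_div_iff₀ h1γ]; nlinarith
  -- decomposition of the TD error
  set D : ℝ := ‖θ - θstar‖ with hDdef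
  have hD0 : 0 ≤ D := norm_nonneg _
  set δ : ℝ := r s + γ * v s' θ - v s θ with hδdef
  have hδeq : δ = (v s θstar - v s θ) + γ * (v s' θ - v s' θstar)
      + γ * (v s' θstar - ∑ s'', P s s'' * v s'' θstar) := by
    rw [hδdef, hbellman s]; ring
  have hδbd : |δ| ≤ l * D + γ * (l * D) + γ * (2 * M) := by
    rw [hδeq]
    calc |(v s θstar - v s θ) + γ * (v s' θ - v s' θstar)
        + γ * (v s' θstar - ∑ s'', P s s'' * v s'' θstar)|
        ≤ |(v s θstar - v s θ) + γ * (v s' θ - v s' θstar)|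
          + |γ * (v s' θstar - ∑ s'', P s s'' * v s'' θstar)| := abs_add_le _ _
      _ ≤ |v s θstar - v s θ| + |γ * (v s' θ - v s' θstar)|
          + |γ * (v s' θstar - ∑ s'', P s s'' * v s'' θstar)| := by
          exact add_le_add_left (abs_add_le _ _) _
      _ ≤ l * D + γ * (l * D) + γ * (2 * M) := by
          apply add_le_add (add_le_add ?_ ?_) ?_
          · rw [abs_sub_comm]; exact hlip s θ
          · rw [abs_mul, abs_of_nonneg hγ0]
            exact mul_le_mul_of_nonneg_left (hlip s' θ) hγ0
          · rw [abs_mul, abs_of_nonneg hγ0]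
            apply mul_le_mul_of_nonneg_left ?_ hγ0
            calc |v s' θstar - ∑ s'', P s s'' * v s'' θstar|
                ≤ |v s' θstar| + |∑ s'', P s s'' * v s'' θstar| := abs_sub _ _
              _ ≤ M + M := add_le_add (hM s') (hsum s)
              _ = 2 * M := by ring
  have hδsq : δ ^ 2 ≤ 3 * ((l * D) ^ 2 + (γ * (l * D)) ^ 2 + (γ * (2 * M)) ^ 2) := by
    nlinarith [sq_abs δ, abs_nonneg δ, sq_nonneg (l * D - γ * (l * D)),
      sq_nonneg (l * D - γ * (2 * M)), sq_nonneg (γ * (l * D) - γ * (2 * M)),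
      mul_nonneg (mul_nonneg hl hD0) (mul_nonneg hγ0 hM0)]
  have hG : ‖gradient (v s) θ‖ ≤ l := hgrad s θ
  have hG0 : 0 ≤ ‖gradient (v s) θ‖ := norm_nonneg _
  have hnorm : ‖δ • gradient (v s) θ‖ ^ 2 = δ ^ 2 * ‖gradient (v s) θ‖ ^ 2 := by
    rw [norm_smul, mul_pow, Real.norm_eq_abs, sq_abs]
  have hMc : 12 * γ ^ 2 * l ^ 2 * M ^ 2 ≤ 12 * γ ^ 2 * l ^ 2 * rmax ^ 2 / (1 - γ) ^ 2 := by
    have h2 : M ^ 2 ≤ (rmax / (1 - γ)) ^ 2 := pow_le_pow_left₀ hM0 hMle 2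
    calc 12 * γ ^ 2 * l ^ 2 * M ^ 2 ≤ 12 * γ ^ 2 * l ^ 2 * ((rmax / (1 - γ)) ^ 2) :=
          mul_le_mul_of_nonneg_left h2 (by positivity)
      _ = 12 * γ ^ 2 * l ^ 2 * rmax ^ 2 / (1 - γ) ^ 2 := by rw [div_pow]; ring
  calc ‖δ • gradient (v s) θ‖ ^ 2 = δ ^ 2 * ‖gradient (v s) θ‖ ^ 2 := hnorm
    _ ≤ (3 * ((l * D) ^ 2 + (γ * (l * D)) ^ 2 + (γ * (2 * M)) ^ 2)) * l ^ 2 := by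
        apply mul_le_mul hδsq ?_ (sq_nonneg _) (by positivity)
        calc ‖gradient (v s) θ‖ ^ 2 ≤ l ^ 2 := by nlinarith
          _ = l ^ 2 := rfl
    _ = 3 * (1 + γ ^ 2) * l ^ 4 * D ^ 2 + 12 * γ ^ 2 * l ^ 2 * M ^ 2 := by ring
    _ ≤ 3 * (1 + γ ^ 2) * l ^ 4 * D ^ 2 + 12 * γ ^ 2 * l ^ 2 * rmax ^ 2 / (1 - γ) ^ 2 :=
        add_le_add_right hMc _
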